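/- (Hajja–Kang linearization over a faithful base) Let G be a finite group acting by field automorphisms on L(y₁,...,ym), the rational function field in m variables over a field L, such that L is G-stable, the restriction of G to L is faithful, and for every σ ∈ G the vector (σ(y₁),...,σ(ym)) equals A(σ)·(y₁,...,ym)ᵗ + B(σ) for some A(σ) ∈ GLₘ(L) and B(σ) ∈ Lᵐ. Then there exist z₁,...,zm ∈ L(y₁,...,ym), fixed by G, with L(y₁,...,ym) = L(z₁,...,zm); consequently L(y₁,...,ym)^G = L^G(z₁,...,zm) is rational over L^G. -/

import Mathlib

open Module Submodule

set_option maxHeartbeats 2000000 in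
set_option synthInstance.maxHeartbeats 1000000 in
theorem hk_core {L : Type*} [Field L] {K : Type*} [Field K] [Algebra L K]
    (G : Type*) [Group G] [Finite G] [MulSemiringAction G K]
    (hstable : ∀ g : G, ∀ a : L, g • (algebraMap L K a) ∈ Set.range (algebraMap L K))
    (hfaithful : ∀ g : G, (∀ a : L, g • algebraMap L K a = algebraMap L K a) → g = 1)
    (m : ℕ) (Y : Fin m → K)
    (hli : LinearIndependent L (Fin.cons 1 Y : Fin (m+1) → K))
    (hgen : Subfield.closure (Set.range (algebraMap L K) ∪ Set.range Y) = ⊤)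
    (haffine : ∀ (g : G) (i : Fin m),
      g • Y i ∈ Submodule.span L (Set.range (Fin.cons 1 Y : Fin (m+1) → K))) :
    ∃ z : Fin m → K,
      (∀ (g : G) (i : Fin m), g • z i = z i) ∧
      Subfield.closure (Set.range (algebraMap L K) ∪ Set.range z) = ⊤ ∧
      FixedPoints.subfield G K =
        Subfield.closure ((Set.range (algebraMap L K) ∩
          (FixedPoints.subfield G K : Set K)) ∪ Set.range z) := by
  classical
  cases nonempty_fintype G
  have hinj : Function.Injective (algebraMap L K) := (algebraMap L K).injective
  -- transport the action to L
  have hτ : ∀ (g : G) (a : L), ∃ b : L, algebraMap L K b = g • algebraMap L K a := by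
    intro g a; obtain ⟨b, hb⟩ := hstable g a; exact ⟨b, hb⟩
  choose τ hτspec using hτ
  letI : MulSemiringAction G L :=
    { smul := τ
      one_smul := fun a => hinj (show algebraMap L K (τ 1 a) = algebraMap L K a by
        rw [hτspec, one_smul])
      mul_smul := fun g h a => hinj
        (show algebraMap L K (τ (g * h) a) = algebraMap L K (τ g (τ h a)) by
          rw [hτspec, hτspec, hτspec, mul_smul])
      smul_zero := fun g => hinj (show algebraMap L K (τ g 0) = algebraMap L K 0 by
        rw [hτspec, map_zero, smul_zero])
      smul_add := fun g a b => hinj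
        (show algebraMap L K (τ g (a + b)) = algebraMap L K (τ g a + τ g b) by
          rw [hτspec, map_add, map_add, smul_add, hτspec, hτspec])
      smul_one := fun g => hinj (show algebraMap L K (τ g 1) = algebraMap L K 1 by
        rw [hτspec, map_one, smul_one])
      smul_mul := fun g a b => hinj
        (show algebraMap L K (τ g (a * b)) = algebraMap L K (τ g a * τ g b) by
          rw [hτspec, map_mul, map_mul, smul_mul', hτspec, hτspec]) }
  have hsmulL : ∀ (g : G) (a : L), algebraMap L K (g • a) = g • algebraMap L K a := hτspec
  haveI : FaithfulSMul G L := by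
    constructor
    intro g g' h
    have h2 : ∀ a : L, (g'⁻¹ * g) • algebraMap L K a = algebraMap L K a := by
      intro a
      rw [mul_smul, ← hsmulL, h, hsmulL, ← mul_smul, inv_mul_cancel, one_smul]
    have := hfaithful _ h2
    exact (inv_mul_eq_one.mp this).symm
  -- the fixed field of L and a basis
  have hnL : finrank (FixedPoints.subfield G L) L = Fintype.card G :=
    FixedPoints.finrank_eq_card G L
  set k := FixedPoints.subfield G L with hk
  let bL : Basis (Fin (finrank k L)) k L := Module.finBasis k L
  -- Dedekind independence of characters
  let χ : G → (L →* L) := fun g =>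
    { toFun := fun a => g • a
      map_one' := smul_one g
      map_mul' := fun a b => smul_mul' g a b }
  have hχinj : Function.Injective χ := by
    intro g g' h
    refine (inv_mul_eq_one.mp (hfaithful _ fun a => ?_)).symm
    have := congrArg (fun f : L →* L => f a) h
    simp only [χ, MonoidHom.coe_mk, OneHom.coe_mk] at this
    rw [mul_smul, ← hsmulL g a, this, hsmulL, ← mul_smul, inv_mul_cancel, one_smul]
  have hχli : LinearIndependent L (fun g : G => ⇑(χ g)) :=
    (linearIndependent_monoidHom L L).comp χ hχinj
  -- the linear span of 1 and the Y's
  set V : Submodule L K := span L (Set.range (Fin.cons 1 Y : Fin (m+1) → K)) with hV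
  have hrange : Set.range (Fin.cons (1:K) Y : Fin (m+1) → K) = insert 1 (Set.range Y) := by
    rw [Fin.range_cons]
  have h1V : (1 : K) ∈ V := subset_span (by rw [hrange]; exact Set.mem_insert _ _)
  have hYV : ∀ i, Y i ∈ V := fun i =>
    subset_span (by rw [hrange]; exact Set.mem_insert_iff.mpr (Or.inr ⟨i, rfl⟩))
  have hsc : ∀ (g : G) (c : L) (x : K), g • (c • x) = (g • c) • (g • x) := by
    intro g c x
    rw [Algebra.smul_def, Algebra.smul_def, smul_mul', hsmulL]
  have hGV : ∀ (g : G) (x : K), x ∈ V → g • x ∈ V := by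
    intro g x hx
    induction hx using Submodule.span_induction with
    | mem x hx =>
      rw [hrange] at hx
      rcases hx with rfl | ⟨i, rfl⟩
      · rw [smul_one]; exact h1V
      · exact haffine g i
    | zero => rw [smul_zero]; exact V.zero_mem
    | add x y _ _ hx hy => rw [smul_add]; exact V.add_mem hx hy
    | smul c x _ hx => rw [hsc]; exact V.smul_mem _ hx
  -- the fixed part of V spans V
  set S : Set K := {x | ∀ g : G, g • x = x} ∩ ↑V with hS
  have hSV : ∀ x ∈ S, x ∈ V := fun x hx => hx.2
  have hVspanS : V ≤ span L S := by
    intro v hv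
    by_contra hvs
    set W : Submodule L K := span L S with hW
    have hvW : (Submodule.Quotient.mk v : K ⧸ W) ≠ 0 := by
      simpa [Submodule.Quotient.mk_eq_zero] using hvs
    obtain ⟨φ, hφ⟩ : ∃ φ : Module.Dual L (K ⧸ W), φ (Submodule.Quotient.mk v) ≠ 0 := by
      by_contra h
      push_neg at h
      exact hvW ((Module.forall_dual_apply_eq_zero_iff L _).mp h)
    set ψ : K →ₗ[L] L := φ.comp W.mkQ with hψ
    have hψW : ∀ x ∈ W, ψ x = 0 := by
      intro x hx
      have : W.mkQ x = 0 := (Submodule.Quotient.mk_eq_zero W).mpr hx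
      simp [hψ, this]
    have hT : ∀ a : L, (∑ g : G, g • ((algebraMap L K a) * v)) ∈ S := by
      intro a
      constructor
      · intro h
        rw [Finset.smul_sum]
        refine Fintype.sum_equiv (Equiv.mulLeft h) _ _ fun g => ?_
        rw [smul_smul]
        rfl
      · refine Submodule.sum_mem V fun g _ => hGV g _ ?_
        rw [← Algebra.smul_def]
        exact V.smul_mem a hv
    have hzero : ∀ a : L, ∑ g : G, ψ (g • v) * (g • a) = 0 := by
      intro a
      have h0 : ψ (∑ g : G, g • ((algebraMap L K a) * v)) = 0 :=
        hψW _ (subset_span (hT a))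
      rw [map_sum] at h0
      rw [← h0]
      refine Finset.sum_congr rfl fun g _ => ?_
      have h1 : (algebraMap L K a) * v = a • v := (Algebra.smul_def a v).symm
      rw [h1, hsc, ψ.map_smul, smul_eq_mul, mul_comm]
    have hc0 : ∀ g : G, ψ (g • v) = 0 := by
      have := Fintype.linearIndependent_iff.mp hχli (fun g => ψ (g • v)) ?_
      · exact this
      · funext a
        have := hzero a
        simpa [χ, Finset.sum_apply] using this
    have : ψ v = 0 := by simpa using hc0 1
    apply hφ
    simpa [hψ] using this
  -- extend {1} to a fixed basis of V
  have h1S : (1 : K) ∈ S := ⟨fun g => smul_one g, h1V⟩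
  have hli1 : LinearIndepOn L id ({(1:K)} : Set K) :=
    LinearIndepOn.singleton one_ne_zero
  have hsub : ({(1:K)} : Set K) ⊆ S := by
    intro x hx
    rw [Set.mem_singleton_iff] at hx
    rw [hx]; exact h1S
  set b : Set K := hli1.extend hsub with hb
  have hbS : b ⊆ S := hli1.extend_subset hsub
  have h1b : (1 : K) ∈ b := hli1.subset_extend hsub rfl
  have hbli : LinearIndependent L ((↑) : b → K) := hli1.linearIndepOn_extend hsub
  have hspanS : span L S = V :=
    le_antisymm (span_le.mpr fun x hx => hx.2) hVspanS
  have hspanb : span L b = V := by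
    rw [hli1.span_extend_eq_span hsub, hspanS]
  -- cardinality of b is m + 1
  let bV1 : Basis (Fin (m+1)) L V := Basis.span hli
  have eq2 : span L (Set.range ((↑) : b → K)) = V := by rw [Subtype.range_coe]; exact hspanb
  let bV2 : Basis b L V := (Basis.span hbli).map (LinearEquiv.ofEq _ _ eq2)
  let e : b ≃ Fin (m+1) := bV2.indexEquiv bV1
  haveI : Fintype b := Fintype.ofEquiv _ e.symm
  have hcardb : Fintype.card b = m + 1 := by
    rw [Fintype.card_congr e, Fintype.card_fin]
  -- the finset b \ {1}
  set B : Finset K := Set.toFinset b with hB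
  have h1B : (1 : K) ∈ B := Set.mem_toFinset.mpr h1b
  have hBcard : B.card = m + 1 := by rw [hB, Set.toFinset_card, hcardb]
  set B' : Finset K := B.erase 1 with hB'
  have hB'card : B'.card = m := by
    rw [hB', Finset.card_erase_of_mem h1B, hBcard]
    omega
  let eqv : {x // x ∈ B'} ≃ Fin m := B'.equivFinOfCardEq hB'card
  set z : Fin m → K := fun i => ((eqv.symm i : {x // x ∈ B'}) : K) with hz
  have hrangez : Set.range z = ↑B' := by
    ext x
    constructor
    · rintro ⟨i, rfl⟩
      exact (eqv.symm i).2
    · intro hx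
      exact ⟨eqv ⟨x, hx⟩, by simp [hz]⟩
  have hB'S : ∀ x ∈ B', x ∈ S := fun x hx =>
    hbS (Set.mem_toFinset.mp (Finset.mem_of_mem_erase hx))
  -- goal 1 : the z's are fixed
  have goal1 : ∀ (g : G) (i : Fin m), g • z i = z i := by
    intro g i
    exact (hB'S _ (eqv.symm i).2).1 g
  -- goal 2 : L and the z's generate K
  set F₀ : Subfield K := Subfield.closure (Set.range (algebraMap L K) ∪ Set.range z) with hF₀
  have hιF₀ : Set.range (algebraMap L K) ⊆ ↑F₀ := fun x hx => Subfield.subset_closure (Or.inl hx)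
  let M₀ : Submodule L K :=
    { carrier := ↑F₀
      add_mem' := fun hx hy => F₀.add_mem hx hy
      zero_mem' := F₀.zero_mem
      smul_mem' := fun c x hx => by
        rw [Algebra.smul_def]
        exact F₀.mul_mem (hιF₀ ⟨c, rfl⟩) hx }
  have hbF₀ : b ⊆ ↑F₀ := by
    intro x hx
    by_cases hx1 : x = 1
    · rw [hx1]; exact F₀.one_mem
    · have : x ∈ B' := Finset.mem_erase.mpr ⟨hx1, Set.mem_toFinset.mpr hx⟩
      exact Subfield.subset_closure (Or.inr (by rw [hrangez]; exact this))
  have hVF₀ : V ≤ M₀ := by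
    rw [← hspanb]
    exact span_le.mpr hbF₀
  have goal2 : F₀ = ⊤ := by
    rw [eq_top_iff, ← hgen]
    refine Subfield.closure_le.mpr (Set.union_subset hιF₀ ?_)
    rintro x ⟨i, rfl⟩
    exact hVF₀ (hYV i)
  -- goal 3 : the fixed field
  set K' : Subfield K := FixedPoints.subfield G K with hK'
  have hmemK' : ∀ x : K, x ∈ K' ↔ ∀ g : G, g • x = x := fun x => Iff.rfl
  set F₁ : Subfield K :=
    Subfield.closure ((Set.range (algebraMap L K) ∩ ↑K') ∪ Set.range z) with hF₁
  have hF₁K' : F₁ ≤ K' := by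
    rw [hF₁]
    refine Subfield.closure_le.mpr (Set.union_subset ?_ ?_)
    · exact fun x hx => hx.2
    · rintro x ⟨i, rfl⟩
      exact (hmemK' _).mpr fun g => goal1 g i
  have hfix : ∀ (c : ↥F₁) (g : G), g • (c : K) = c := fun c g => (hmemK' _).mp (hF₁K' c.2) g
  have hsmulF₁ : ∀ (c : ↥F₁) (x : K), c • x = (c : K) * x := fun c x => rfl
  have hsmulk : ∀ (c : ↥k) (v : L), c • v = (c : L) * v := fun c v => rfl
  haveI : SMulCommClass G ↥F₁ K := by
    constructor
    intro g c x
    rw [hsmulF₁, hsmulF₁, smul_mul', hfix]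
  -- the span of the image of L over F₁ is everything and is finite-dimensional
  set MM : Submodule ↥F₁ K := span ↥F₁ (Set.range (algebraMap L K)) with hMM
  have hMMmul : ∀ x ∈ MM, ∀ y ∈ MM, x * y ∈ MM := by
    have hss : MM * MM ≤ MM := by
      rw [hMM, span_mul_span]
      refine span_le.mpr ?_
      rintro t ⟨p, ⟨ap, rfl⟩, q, ⟨aq, rfl⟩, rfl⟩
      exact subset_span ⟨ap * aq, map_mul _ _ _⟩
    intro x hx y hy
    exact hss (mul_mem_mul hx hy)
  have h1MM : (1 : K) ∈ MM := subset_span ⟨1, map_one _⟩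
  have hcoefF₁ : ∀ c : ↥k, algebraMap L K (c : L) ∈ F₁ := by
    intro c
    refine Subfield.subset_closure (Or.inl ⟨⟨(c : L), rfl⟩, ?_⟩)
    intro g
    rw [← hsmulL]
    exact congrArg _ (c.2 g)
  have hMMspan : MM = span ↥F₁ (Set.range fun i => algebraMap L K (bL i)) := by
    refine le_antisymm (span_le.mpr ?_) (span_le.mpr ?_)
    · rintro x ⟨a, rfl⟩
      have hrep : (∑ i, bL.repr a i • bL i) = a := bL.sum_repr a
      rw [← hrep, map_sum]
      refine Submodule.sum_mem _ fun i _ => ?_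
      have h2 : algebraMap L K ((bL.repr a i : L) * bL i)
          = (⟨algebraMap L K ((bL.repr a i : L)), hcoefF₁ _⟩ : ↥F₁) • algebraMap L K (bL i) := by
        rw [map_mul, hsmulF₁]
      rw [hsmulk, h2]
      exact Submodule.smul_mem _ _ (subset_span ⟨i, rfl⟩)
    · rintro x ⟨i, rfl⟩
      exact subset_span ⟨bL i, rfl⟩
  haveI hfdMM : FiniteDimensional ↥F₁ ↥MM := by
    rw [hMMspan]
    exact FiniteDimensional.span_of_finite _ (Set.finite_range _)
  have hMMinv : ∀ x ∈ MM, x⁻¹ ∈ MM := by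
    intro x hx
    rcases eq_or_ne x 0 with rfl | hx0
    · rw [inv_zero]; exact MM.zero_mem
    · let f : ↥MM →ₗ[↥F₁] ↥MM :=
        { toFun := fun y => ⟨x * (y : K), hMMmul x hx _ y.2⟩
          map_add' := fun y y' => by ext; simp [mul_add]
          map_smul' := fun c y => by
            ext
            simp only [SetLike.val_smul, hsmulF₁, RingHom.id_apply]
            ring }
      have hfinj : Function.Injective f := by
        intro y y' hyy
        have h3 : x * (y : K) = x * (y' : K) := congrArg Subtype.val hyy
        exact Subtype.ext (mul_left_cancel₀ hx0 h3)
      have hfsurj : Function.Surjective f := LinearMap.injective_iff_surjective.mp hfinj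
      obtain ⟨y, hy⟩ := hfsurj ⟨1, h1MM⟩
      have hxy : x * (y : K) = 1 := congrArg Subtype.val hy
      rw [inv_eq_of_mul_eq_one_right hxy]
      exact y.2
  have hMMtop : ∀ x : K, x ∈ MM := by
    let FF : Subfield K :=
      { carrier := ↑MM
        zero_mem' := MM.zero_mem
        one_mem' := h1MM
        add_mem' := fun hx hy => MM.add_mem hx hy
        mul_mem' := fun hx hy => hMMmul _ hx _ hy
        neg_mem' := fun hx => MM.neg_mem hx
        inv_mem' := fun x hx => hMMinv x hx }
    intro x
    have htop : (⊤ : Subfield K) ≤ FF := by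
      rw [← goal2, hF₀]
      refine Subfield.closure_le.mpr (Set.union_subset ?_ ?_)
      · exact fun t ht => subset_span ht
      · rintro t ⟨i, rfl⟩
        have hzF₁ : z i ∈ F₁ := Subfield.subset_closure (Or.inr ⟨i, rfl⟩)
        have h4 : (⟨z i, hzF₁⟩ : ↥F₁) • (1 : K) ∈ MM := MM.smul_mem _ h1MM
        have h5 : (⟨z i, hzF₁⟩ : ↥F₁) • (1 : K) = z i := by rw [hsmulF₁, mul_one]
        rwa [h5] at h4
    exact htop (Subfield.mem_top x)
  have hspanTop : span ↥F₁ (Set.range fun i => algebraMap L K (bL i)) = ⊤ := by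
    rw [← hMMspan]
    exact eq_top_iff.mpr fun x _ => hMMtop x
  haveI : FiniteDimensional ↥F₁ K := by
    have h2 : FiniteDimensional ↥F₁ ↥(⊤ : Submodule ↥F₁ K) := by
      rw [← hspanTop]
      exact FiniteDimensional.span_of_finite _ (Set.finite_range _)
    exact Module.Finite.equiv (LinearEquiv.ofTop ⊤ rfl)
  have hfinrankK : finrank ↥F₁ K ≤ Fintype.card G := by
    have h1 : finrank ↥F₁ K = finrank ↥F₁ ↥(⊤ : Submodule ↥F₁ K) := (finrank_top _ _).symm
    rw [h1, ← hspanTop]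
    refine le_trans (finrank_span_le_card _) ?_
    rw [Set.toFinset_card]
    exact le_trans (Fintype.card_range_le _) (by rw [Fintype.card_fin, hnL])
  -- Artin : [K : K^G] = |G| via fixed field of the automorphism group
  let φ : G →* (K ≃ₐ[↥F₁] K) := MulSemiringAction.toAlgAut G ↥F₁ K
  have hφapp : ∀ (g : G) (x : K), φ g x = g • x := fun g x => rfl
  have hφinj : Function.Injective φ := by
    intro g g' hgg
    refine (inv_mul_eq_one.mp (hfaithful _ fun a => ?_)).symm
    have h6 : g • algebraMap L K a = g' • algebraMap L K a := by
      rw [← hφapp, ← hφapp, hgg]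
    rw [mul_smul, h6, ← mul_smul, inv_mul_cancel, one_smul]
  let H : Subgroup (K ≃ₐ[↥F₁] K) := φ.range
  haveI : DecidablePred (· ∈ H) := fun _ => Classical.dec _
  set E : IntermediateField ↥F₁ K := IntermediateField.fixedField H with hE
  have hfrE : finrank ↥E K = Fintype.card G := by
    rw [hE, IntermediateField.finrank_fixedField_eq_card]
    have h8 : Fintype.card ↥H = Fintype.card G :=
      Fintype.card_congr (MonoidHom.ofInjective hφinj).toEquiv.symm
    convert h8 using 2
    exact Nat.card_eq_fintype_card
  have hmemE : ∀ x : K, x ∈ E ↔ ∀ g : G, g • x = x := by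
    intro x
    constructor
    · intro hx g
      have h7 := hx ⟨φ g, ⟨g, rfl⟩⟩
      rw [← hφapp g x]
      exact h7
    · rintro hx ⟨σ, g, rfl⟩
      exact hx g
  have htower : finrank ↥F₁ ↥E * finrank ↥E K = finrank ↥F₁ K :=
    Module.finrank_mul_finrank ↥F₁ ↥E K
  have hE1 : finrank ↥F₁ ↥E = 1 := by
    have hpos : 0 < finrank ↥E K := by rw [hfrE]; exact Fintype.card_pos
    have hle : finrank ↥F₁ ↥E * finrank ↥E K ≤ 1 * finrank ↥E K := by
      calc finrank ↥F₁ ↥E * finrank ↥E K = finrank ↥F₁ K := htower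
        _ ≤ Fintype.card G := hfinrankK
        _ = finrank ↥E K := hfrE.symm
        _ = 1 * finrank ↥E K := (one_mul _).symm
    have ha : finrank ↥F₁ ↥E ≤ 1 := Nat.le_of_mul_le_mul_right hle hpos
    have ha2 : 0 < finrank ↥F₁ ↥E := finrank_pos
    omega
  have hEbot : E = ⊥ := IntermediateField.finrank_eq_one_iff.mp hE1
  refine ⟨z, goal1, goal2, ?_⟩
  refine le_antisymm ?_ hF₁K'
  intro x hx
  have hxE : x ∈ E := (hmemE x).mpr ((hmemK' x).mp hx)
  rw [hEbot] at hxE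
  obtain ⟨c, rfl⟩ := IntermediateField.mem_bot.mp hxE
  exact c.2


set_option maxHeartbeats 1000000 in
set_option synthInstance.maxHeartbeats 1000000 in
/-- Hajja–Kang linearization: if a finite group `G` acts by field automorphisms on
`L(y₁,…,yₘ)` stabilizing `L`, faithfully on `L`, and affinely (invertible matrix plus
translation over `L`) on the variables, then there are `G`-fixed elements `z₁,…,zₘ`
with `L(y₁,…,yₘ) = L(z₁,…,zₘ)`; hence `L(y₁,…,yₘ)^G = L^G(z₁,…,zₘ)`. -/
theorem hajja_kang_linearization (L : Type*) [Field L] (m : ℕ) (hm : 0 < m)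
    (G : Type*) [Group G] [Finite G]
    [MulSemiringAction G (FractionRing (MvPolynomial (Fin m) L))]
    (ι : L →+* FractionRing (MvPolynomial (Fin m) L))
    (hι : ι = algebraMap L (FractionRing (MvPolynomial (Fin m) L)))
    (Y : Fin m → FractionRing (MvPolynomial (Fin m) L))
    (hY : ∀ i, Y i = algebraMap (MvPolynomial (Fin m) L)
      (FractionRing (MvPolynomial (Fin m) L)) (MvPolynomial.X i))
    -- `L` is stable under `G`
    (hstable : ∀ g : G, ∀ a : L, g • ι a ∈ Set.range ι)
    -- the restricted action of `G` on `L` is faithful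
    (hfaithful : ∀ g : G, (∀ a : L, g • ι a = ι a) → g = 1)
    -- `G` acts affinely on the variables: `σ(y) = A(σ) y + B(σ)`
    (haffine : ∀ g : G, ∃ (A : Matrix (Fin m) (Fin m) L) (B : Fin m → L), IsUnit A.det ∧
      ∀ i, g • Y i = ∑ j, ι (A i j) * Y j + ι (B i)) :
    ∃ z : Fin m → FractionRing (MvPolynomial (Fin m) L),
      (∀ (g : G) (i : Fin m), g • z i = z i) ∧
      Subfield.closure (Set.range ι ∪ Set.range z) = ⊤ ∧
      FixedPoints.subfield G (FractionRing (MvPolynomial (Fin m) L)) =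
        Subfield.closure
          ((Set.range ι ∩
            (FixedPoints.subfield G (FractionRing (MvPolynomial (Fin m) L)) : Set
              (FractionRing (MvPolynomial (Fin m) L)))) ∪ Set.range z) := by
  subst hι
  classical
  -- linear independence of 1, Y₁, ..., Yₘ over L
  have hli : LinearIndependent L (Fin.cons 1 Y : Fin (m+1) → FractionRing (MvPolynomial (Fin m) L)) := by
    set d : Fin (m+1) → (Fin m →₀ ℕ) :=
      Fin.cons 0 (fun i => Finsupp.single i 1) with hd
    have hdinj : Function.Injective d := by
      rw [hd, Fin.cons_injective_iff]
      constructor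
      · rintro ⟨i, hi⟩
        exact one_ne_zero (Finsupp.single_eq_zero.mp hi)
      · exact fun i j hij => Finsupp.single_left_injective one_ne_zero hij
    have hmono : LinearIndependent L
        (fun j : Fin (m+1) => (MvPolynomial.basisMonomials (Fin m) L) (d j)) :=
      (MvPolynomial.basisMonomials (Fin m) L).linearIndependent.comp d hdinj
    have hker : LinearMap.ker ((IsScalarTower.toAlgHom L (MvPolynomial (Fin m) L) (FractionRing (MvPolynomial (Fin m) L))).toLinearMap) = ⊥ :=
      LinearMap.ker_eq_bot.mpr (IsFractionRing.injective (MvPolynomial (Fin m) L) (FractionRing (MvPolynomial (Fin m) L)))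
    have hmap := hmono.map' (IsScalarTower.toAlgHom L (MvPolynomial (Fin m) L) (FractionRing (MvPolynomial (Fin m) L))).toLinearMap hker
    have heq : ((IsScalarTower.toAlgHom L (MvPolynomial (Fin m) L) (FractionRing (MvPolynomial (Fin m) L))).toLinearMap ∘
        fun j : Fin (m+1) => (MvPolynomial.basisMonomials (Fin m) L) (d j)) =
        (Fin.cons 1 Y : Fin (m+1) → FractionRing (MvPolynomial (Fin m) L)) := by
      funext j
      refine Fin.cases ?_ (fun i => ?_) j
      · simp [hd, MvPolynomial.coe_basisMonomials]
      · have h1 : d i.succ = Finsupp.single i 1 := by simp [hd]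
        have h2 : (MvPolynomial.basisMonomials (Fin m) L) (Finsupp.single i 1) =
            MvPolynomial.X i := by
          rw [MvPolynomial.coe_basisMonomials]
          rfl
        show algebraMap (MvPolynomial (Fin m) L) (FractionRing (MvPolynomial (Fin m) L)) ((MvPolynomial.basisMonomials (Fin m) L) (d i.succ)) =
          (Fin.cons 1 Y : Fin (m+1) → FractionRing (MvPolynomial (Fin m) L)) i.succ
        rw [h1, h2, Fin.cons_succ, hY]
    rw [heq] at hmap
    exact hmap
  -- generation
  have hgen : Subfield.closure (Set.range (algebraMap L (FractionRing (MvPolynomial (Fin m) L))) ∪ Set.range Y) = ⊤ := by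
    rw [eq_top_iff]
    intro x _
    have hR0 : ∀ p : MvPolynomial (Fin m) L, algebraMap (MvPolynomial (Fin m) L) (FractionRing (MvPolynomial (Fin m) L)) p ∈
        Subfield.closure (Set.range (algebraMap L (FractionRing (MvPolynomial (Fin m) L))) ∪ Set.range Y) := by
      intro p
      induction p using MvPolynomial.induction_on with
      | C a =>
        have h3 : algebraMap (MvPolynomial (Fin m) L) (FractionRing (MvPolynomial (Fin m) L)) (MvPolynomial.C a) = algebraMap L (FractionRing (MvPolynomial (Fin m) L)) a := by
          rw [← MvPolynomial.algebraMap_eq, ← IsScalarTower.algebraMap_apply]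
        rw [h3]
        exact Subfield.subset_closure (Or.inl ⟨a, rfl⟩)
      | add p q hp hq => rw [map_add]; exact Subfield.add_mem _ hp hq
      | mul_X p i hp =>
        rw [map_mul]
        exact Subfield.mul_mem _ hp (Subfield.subset_closure (Or.inr ⟨i, hY i⟩))
    obtain ⟨p, q, hq, hpq⟩ := IsFractionRing.div_surjective (A := MvPolynomial (Fin m) L) x
    rw [← hpq]
    exact Subfield.div_mem _ (hR0 p) (hR0 q)
  -- affine action in span form
  have haffine' : ∀ (g : G) (i : Fin m),
      g • Y i ∈ Submodule.span L (Set.range (Fin.cons 1 Y : Fin (m+1) → FractionRing (MvPolynomial (Fin m) L))) := by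
    intro g i
    obtain ⟨A, B, hdet, hAB⟩ := haffine g
    rw [hAB i]
    refine Submodule.add_mem _ (Submodule.sum_mem _ fun j _ => ?_) ?_
    · rw [← Algebra.smul_def]
      exact Submodule.smul_mem _ _ (Submodule.subset_span ⟨j.succ, by simp⟩)
    · rw [Algebra.algebraMap_eq_smul_one]
      exact Submodule.smul_mem _ _ (Submodule.subset_span ⟨0, by simp⟩)
  exact hk_core G hstable hfaithful m Y hli hgen haffine'
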